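/- Let X be a compact metric space, S ⊆ C(ℝ,X) a shift-invariant Borel set, and μ an invariant measure of S, witnessed by a shift-invariant Borel probability measure ν on C(ℝ,X) with ν(S) = 1 and μ = π_*ν. For t ∈ ℝ and A ⊆ X define V(t)⁻¹A := {x ∈ X : there exists φ ∈ S with φ(0) = x and φ(t) ∈ A}. Then for every Borel set A ⊆ X and every t ∈ ℝ: μ(A) ≤ μ*(V(t)⁻¹A), where μ* denotes the outer measure induced by μ. -/
import Mathlib


open Set Filter Topology MeasureTheory

namespace AxODE

variable {X : Type*} [MetricSpace X]

/-- The shift map `σ(t, φ)(s) = φ(s + t)` on `C(ℝ, X)`. -/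
def shift (t : ℝ) (φ : C(ℝ, X)) : C(ℝ, X) :=
  ⟨fun s => φ (s + t), φ.continuous.comp (continuous_add_right t)⟩

/-- `S` is shift-invariant if `σ(t, φ) ∈ S` for all `t ∈ ℝ` and `φ ∈ S`. -/
def ShiftInvariant (S : Set C(ℝ, X)) : Prop :=
  ∀ (t : ℝ), ∀ φ ∈ S, shift t φ ∈ S

/-- `V(t)⁻¹A = {x ∈ X : ∃ φ ∈ S, φ(0) = x, φ(t) ∈ A}`. -/
def Vinv (S : Set C(ℝ, X)) (t : ℝ) (A : Set X) : Set X :=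
  {x | ∃ φ ∈ S, φ 0 = x ∧ φ t ∈ A}

lemma continuous_shift (t : ℝ) : Continuous (shift (X := X) t) := by
  have : shift (X := X) t =
      fun φ => φ.comp ⟨fun s => s + t, continuous_add_right t⟩ := rfl
  rw [this]
  exact ContinuousMap.continuous_precomp _

/-- Note: a measure in Mathlib, applied to an arbitrary (possibly
non-measurable) set, gives the induced outer measure of that set. -/
theorem invariant_measure_le_Vinv [CompactSpace X]
    [MeasurableSpace X] [BorelSpace X]
    [MeasurableSpace C(ℝ, X)] [BorelSpace C(ℝ, X)]
    (S : Set C(ℝ, X)) (hS : ShiftInvariant S) (hSmeas : MeasurableSet S)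
    (μ : Measure X) (ν : Measure C(ℝ, X)) (hν : IsProbabilityMeasure ν)
    (hνS : ν S = 1) (hνinv : ∀ t : ℝ, Measure.map (shift t) ν = ν)
    (hμ : μ = Measure.map (fun φ : C(ℝ, X) => φ 0) ν) :
    ∀ A : Set X, MeasurableSet A → ∀ t : ℝ, μ A ≤ μ (Vinv S t A) := by
  intro A hA t
  have hev : ∀ s : ℝ, Measurable (fun φ : C(ℝ, X) => φ s) := fun s =>
    (continuous_eval_const s).measurable
  have hSc : ν Sᶜ = 0 := by
    rw [measure_compl hSmeas (measure_ne_top ν S), hνS, measure_univ]; simp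
  -- full measure trick: ν B = ν (B ∩ S) for any B
  have hfull : ∀ B : Set C(ℝ, X), ν B ≤ ν (B ∩ S) := by
    intro B
    calc ν B = ν ((B ∩ S) ∪ (B ∩ Sᶜ)) := by rw [inter_union_compl]
    _ ≤ ν (B ∩ S) + ν (B ∩ Sᶜ) := measure_union_le _ _
    _ ≤ ν (B ∩ S) + ν Sᶜ := by gcongr; exact inter_subset_right
    _ = ν (B ∩ S) := by rw [hSc, add_zero]
  -- step 1: μ A = ν {φ | φ 0 ∈ A}
  have h1 : μ A = ν ((fun φ : C(ℝ, X) => φ 0) ⁻¹' A) := by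
    rw [hμ, Measure.map_apply (hev 0) hA]
  -- the measurable set B
  set B : Set C(ℝ, X) := S ∩ ((fun φ : C(ℝ, X) => φ 0) ⁻¹' A) with hB
  have hBmeas : MeasurableSet B := hSmeas.inter ((hev 0) hA)
  -- step 2: ν B = ν ((shift t) ⁻¹' B)
  have h2 : ν B = ν (shift t ⁻¹' B) := by
    conv_lhs => rw [← hνinv t]
    rw [Measure.map_apply (continuous_shift t).measurable hBmeas]
  -- step 3: (shift t ⁻¹' B) ∩ S ⊆ S ∩ {φ | φ t ∈ A}
  have h3 : (shift t ⁻¹' B) ∩ S ⊆ S ∩ ((fun φ : C(ℝ, X) => φ t) ⁻¹' A) := by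
    rintro φ ⟨⟨_, hφt⟩, hφS⟩
    refine ⟨hφS, ?_⟩
    simpa [shift, zero_add] using hφt
  -- step 4: S ∩ {φ | φ t ∈ A} ⊆ π ⁻¹' Vinv
  have h4 : S ∩ ((fun φ : C(ℝ, X) => φ t) ⁻¹' A) ⊆
      (fun φ : C(ℝ, X) => φ 0) ⁻¹' (Vinv S t A) := by
    rintro φ ⟨hφS, hφt⟩
    exact ⟨φ, hφS, rfl, hφt⟩
  calc μ A = ν ((fun φ : C(ℝ, X) => φ 0) ⁻¹' A) := h1
  _ ≤ ν B := by
      have := hfull ((fun φ : C(ℝ, X) => φ 0) ⁻¹' A)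
      rwa [inter_comm] at this
  _ = ν (shift t ⁻¹' B) := h2
  _ ≤ ν ((shift t ⁻¹' B) ∩ S) := hfull _
  _ ≤ ν ((fun φ : C(ℝ, X) => φ 0) ⁻¹' (Vinv S t A)) :=
      measure_mono (h3.trans h4)
  _ ≤ μ (Vinv S t A) := by
      rw [hμ]
      exact Measure.le_map_apply (hev 0).aemeasurable _

end AxODE
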